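/- Let a group Γ with a finite symmetric generating set G act on the right on a countable set X. The action is amenable (i.e., there exists a Γ-invariant mean on ℓ^∞(X)) if and only if for every ε > 0 there exists a nonempty finite subset P of X such that |Pg \ P| < ε|P| for every g ∈ G (Følner's criterion). -/

import Mathlib

/-- A function on `X` is bounded. -/
def IsBdd {X : Type*} (f : X → ℝ) : Prop := ∃ C : ℝ, ∀ x, |f x| ≤ C

/-- An invariant mean for a right action `act` of `Γ` on `X`: a linear functional on
`ℓ^∞(X)` with `inf f ≤ μ(f) ≤ sup f` and `μ(f ∘ r_g) = μ(f)` for all `g ∈ Γ`. -/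
structure IsInvariantMean {Γ X : Type*} [Group Γ] (act : X → Γ → X)
    (μ : (X → ℝ) → ℝ) : Prop where
  map_add : ∀ f g : X → ℝ, IsBdd f → IsBdd g → μ (f + g) = μ f + μ g
  map_smul : ∀ (c : ℝ) (f : X → ℝ), IsBdd f → μ (c • f) = c * μ f
  between : ∀ f : X → ℝ, IsBdd f → sInf (Set.range f) ≤ μ f ∧ μ f ≤ sSup (Set.range f)
  invariant : ∀ (f : X → ℝ) (g : Γ), IsBdd f → μ (fun x => f (act x g)) = μ f

open Filter Topology

lemma isBdd_const {X : Type*} (c : ℝ) : IsBdd (fun _ : X => c) :=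
  ⟨|c|, fun _ => le_refl _⟩

lemma isBdd_zero {X : Type*} : IsBdd (0 : X → ℝ) := ⟨0, fun _ => by simp⟩

lemma isBdd_add {X : Type*} {f g : X → ℝ} (hf : IsBdd f) (hg : IsBdd g) :
    IsBdd (f + g) := by
  obtain ⟨C, hC⟩ := hf; obtain ⟨D, hD⟩ := hg
  exact ⟨C + D, fun x => (abs_add_le _ _).trans (add_le_add (hC x) (hD x))⟩

lemma isBdd_sum {X ι : Type*} (s : Finset ι) (F : ι → X → ℝ)
    (h : ∀ i ∈ s, IsBdd (F i)) : IsBdd (∑ i ∈ s, F i) := by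
  classical
  induction s using Finset.induction_on with
  | empty => simpa using isBdd_zero
  | insert a s' hni ih =>
      rw [Finset.sum_insert hni]
      exact isBdd_add (h a (Finset.mem_insert_self a s'))
        (ih fun i hi => h i (Finset.mem_insert_of_mem hi))

section Mean
variable {Γ X : Type*} [Group Γ] {act : X → Γ → X} {μ : (X → ℝ) → ℝ}
  (hμ : IsInvariantMean act μ)

lemma mu_zero (hμ : IsInvariantMean act μ) : μ 0 = 0 := by
  have := hμ.map_smul 0 0 isBdd_zero
  simpa using this

lemma mu_const [Nonempty X] (hμ : IsInvariantMean act μ) (c : ℝ) :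
    μ (fun _ => c) = c := by
  obtain ⟨h1, h2⟩ := hμ.between (fun _ => c) (isBdd_const c)
  rw [Set.range_const, csInf_singleton] at h1
  rw [Set.range_const, csSup_singleton] at h2
  linarith

lemma mu_finsum {ι : Type*} (hμ : IsInvariantMean act μ) (s : Finset ι)
    (F : ι → X → ℝ) (h : ∀ i ∈ s, IsBdd (F i)) :
    μ (∑ i ∈ s, F i) = ∑ i ∈ s, μ (F i) := by
  classical
  induction s using Finset.induction_on with
  | empty => simpa using mu_zero hμ
  | insert a s' hni ih =>
      rw [Finset.sum_insert hni, Finset.sum_insert hni,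
        hμ.map_add _ _ (h a (Finset.mem_insert_self a s'))
          (isBdd_sum s' F fun i hi => h i (Finset.mem_insert_of_mem hi)),
        ih fun i hi => h i (Finset.mem_insert_of_mem hi)]

end Mean


/-- Difference of sums over two finsets of equal cardinality. -/
lemma sum_diff_bound {X : Type*} [DecidableEq X] (f : X → ℝ) (C : ℝ)
    (hC : ∀ x, |f x| ≤ C) (P Q : Finset X) (hcard : Q.card = P.card) :
    |∑ x ∈ Q, f x - ∑ x ∈ P, f x| ≤ 2 * C * ((Q \ P).card : ℝ) := by
  have e1 : ∑ x ∈ Q, f x = ∑ x ∈ Q ∩ P, f x + ∑ x ∈ Q \ P, f x :=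
    (Finset.sum_inter_add_sum_sdiff Q P f).symm
  have e2 : ∑ x ∈ P, f x = ∑ x ∈ P ∩ Q, f x + ∑ x ∈ P \ Q, f x :=
    (Finset.sum_inter_add_sum_sdiff P Q f).symm
  have e3 : Q ∩ P = P ∩ Q := Finset.inter_comm Q P
  have hc : (P \ Q).card = (Q \ P).card := by
    have h1 : (Q \ P).card + (Q ∩ P).card = Q.card := Finset.card_sdiff_add_card_inter Q P
    have h2 : (P \ Q).card + (P ∩ Q).card = P.card := Finset.card_sdiff_add_card_inter P Q
    rw [e3] at h1
    omega
  have b1 : |∑ x ∈ Q \ P, f x| ≤ C * ((Q \ P).card : ℝ) := by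
    calc |∑ x ∈ Q \ P, f x| ≤ ∑ x ∈ Q \ P, |f x| := Finset.abs_sum_le_sum_abs _ _
      _ ≤ ∑ _x ∈ Q \ P, C := Finset.sum_le_sum (fun x _ => hC x)
      _ = C * ((Q \ P).card : ℝ) := by rw [Finset.sum_const, nsmul_eq_mul, mul_comm]
  have b2 : |∑ x ∈ P \ Q, f x| ≤ C * ((Q \ P).card : ℝ) := by
    calc |∑ x ∈ P \ Q, f x| ≤ ∑ x ∈ P \ Q, |f x| := Finset.abs_sum_le_sum_abs _ _
      _ ≤ ∑ _x ∈ P \ Q, C := Finset.sum_le_sum (fun x _ => hC x)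
      _ = C * ((P \ Q).card : ℝ) := by rw [Finset.sum_const, nsmul_eq_mul, mul_comm]
      _ = C * ((Q \ P).card : ℝ) := by rw [hc]
  calc |∑ x ∈ Q, f x - ∑ x ∈ P, f x|
      = |∑ x ∈ Q \ P, f x - ∑ x ∈ P \ Q, f x| := by rw [e1, e2, e3]; ring_nf
    _ ≤ |∑ x ∈ Q \ P, f x| + |∑ x ∈ P \ Q, f x| := abs_sub _ _
    _ ≤ 2 * C * ((Q \ P).card : ℝ) := by linarith

lemma folner_to_mean {Γ X : Type*} [Group Γ] [Nonempty X] [DecidableEq X]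
    (Gen : Finset Γ)
    (hgen : Subgroup.closure (Gen : Set Γ) = ⊤)
    (act : X → Γ → X) (act_one : ∀ x, act x 1 = x)
    (act_mul : ∀ (x : X) (g h : Γ), act (act x g) h = act x (g * h))
    (hF : ∀ ε : ℝ, 0 < ε → ∃ P : Finset X, P.Nonempty ∧ ∀ g ∈ Gen,
        (((P.image fun x => act x g) \ P).card : ℝ) < ε * P.card) :
    ∃ μ : (X → ℝ) → ℝ, IsInvariantMean act μ := by
  classical
  have hinj : ∀ g : Γ, Function.Injective (fun x => act x g) := by
    intro g x y h
    have : act (act x g) g⁻¹ = act (act y g) g⁻¹ := by simp only at h; rw [h]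
    rwa [act_mul, act_mul, mul_inv_cancel, act_one, act_one] at this
  -- Følner sequence
  have hP' : ∀ n : ℕ, ∃ P : Finset X, P.Nonempty ∧ ∀ g ∈ Gen,
      (((P.image fun x => act x g) \ P).card : ℝ) < (1 / (n + 1)) * P.card := by
    intro n; exact hF (1 / (n + 1)) (by positivity)
  choose P hPne hPf using hP'
  -- averages
  set avg : (X → ℝ) → ℕ → ℝ := fun f n => (∑ x ∈ P n, f x) / (P n).card with havg
  have hcardpos : ∀ n, (0 : ℝ) < (P n).card := by
    intro n; exact_mod_cast Finset.card_pos.2 (hPne n)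
  -- the ultrafilter
  set u : Ultrafilter ℕ := Ultrafilter.of atTop with hu
  have hule : (u : Filter ℕ) ≤ atTop := Ultrafilter.of_le _
  -- averages of bounded functions are bounded, hence have a limit along u
  have havgbdd : ∀ (f : X → ℝ) (C : ℝ), (∀ x, |f x| ≤ C) → ∀ n, |avg f n| ≤ C := by
    intro f C hC n
    rw [havg]
    rw [abs_div, abs_of_pos (hcardpos n), div_le_iff₀ (hcardpos n)]
    calc |∑ x ∈ P n, f x| ≤ ∑ x ∈ P n, |f x| := Finset.abs_sum_le_sum_abs _ _
      _ ≤ ∑ _x ∈ P n, C := Finset.sum_le_sum (fun x _ => hC x)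
      _ = C * ((P n).card : ℝ) := by rw [Finset.sum_const, nsmul_eq_mul, mul_comm]
  have hlimex : ∀ f : X → ℝ, IsBdd f → ∃ L, Tendsto (avg f) u (𝓝 L) := by
    intro f ⟨C, hC⟩
    have hmem : ∀ n, avg f n ∈ Set.Icc (-C) C := by
      intro n; exact abs_le.1 (havgbdd f C hC n)
    have hcpt : IsCompact (Set.Icc (-C) C) := isCompact_Icc
    have hle : (u.map (avg f) : Filter ℝ) ≤ Filter.principal (Set.Icc (-C) C) := by
      rw [le_principal_iff]
      exact Filter.mem_map.2 (Filter.univ_mem' hmem)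
    obtain ⟨L, _, hL⟩ := hcpt.ultrafilter_le_nhds (u.map (avg f)) hle
    exact ⟨L, hL⟩
  -- the mean
  set μ : (X → ℝ) → ℝ := fun f =>
    if h : ∃ L, Tendsto (avg f) u (𝓝 L) then h.choose else 0 with hμdef
  have hμlim : ∀ f : X → ℝ, IsBdd f → Tendsto (avg f) u (𝓝 (μ f)) := by
    intro f hf
    have h := hlimex f hf
    rw [hμdef]; simp only [dif_pos h]
    exact h.choose_spec
  refine ⟨μ, ?_, ?_, ?_, ?_⟩
  · -- map_add
    intro f g hf hg
    have h1 : avg (f + g) = fun n => avg f n + avg g n := by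
      funext n
      rw [havg]
      simp only [Pi.add_apply, Finset.sum_add_distrib, add_div]
    have h2 : Tendsto (avg (f + g)) u (𝓝 (μ f + μ g)) := by
      rw [h1]; exact (hμlim f hf).add (hμlim g hg)
    exact tendsto_nhds_unique (hμlim (f + g) (by
      obtain ⟨C, hC⟩ := hf; obtain ⟨D, hD⟩ := hg
      exact ⟨C + D, fun x => (abs_add_le _ _).trans (add_le_add (hC x) (hD x))⟩)) h2
  · -- map_smul
    intro c f hf
    have h1 : avg (c • f) = fun n => c * avg f n := by
      funext n
      rw [havg]
      simp only [Pi.smul_apply, smul_eq_mul, ← Finset.mul_sum, mul_div_assoc]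
    have h2 : Tendsto (avg (c • f)) u (𝓝 (c * μ f)) := by
      rw [h1]; exact (hμlim f hf).const_mul c
    exact tendsto_nhds_unique (hμlim (c • f) (by
      obtain ⟨C, hC⟩ := hf
      exact ⟨|c| * C, fun x => by
        rw [Pi.smul_apply, smul_eq_mul, abs_mul]
        exact mul_le_mul_of_nonneg_left (hC x) (abs_nonneg c)⟩)) h2
  · -- between
    intro f hf
    obtain ⟨C, hC⟩ := hf
    have hbddB : BddBelow (Set.range f) := by
      refine ⟨-C, ?_⟩; rintro y ⟨x, rfl⟩; exact (abs_le.1 (hC x)).1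
    have hbddA : BddAbove (Set.range f) := by
      refine ⟨C, ?_⟩; rintro y ⟨x, rfl⟩; exact (abs_le.1 (hC x)).2
    have hne : (Set.range f).Nonempty := Set.range_nonempty f
    have hmem : ∀ n, avg f n ∈ Set.Icc (sInf (Set.range f)) (sSup (Set.range f)) := by
      intro n
      constructor
      · rw [havg, le_div_iff₀ (hcardpos n)]
        calc sInf (Set.range f) * ((P n).card : ℝ)
            = ∑ _x ∈ P n, sInf (Set.range f) := by
              rw [Finset.sum_const, nsmul_eq_mul, mul_comm]
          _ ≤ ∑ x ∈ P n, f x :=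
              Finset.sum_le_sum (fun x _ => csInf_le hbddB ⟨x, rfl⟩)
      · rw [havg, div_le_iff₀ (hcardpos n)]
        calc ∑ x ∈ P n, f x
            ≤ ∑ _x ∈ P n, sSup (Set.range f) :=
              Finset.sum_le_sum (fun x _ => le_csSup hbddA ⟨x, rfl⟩)
          _ = sSup (Set.range f) * ((P n).card : ℝ) := by
              rw [Finset.sum_const, nsmul_eq_mul, mul_comm]
    have := isClosed_Icc.mem_of_tendsto (hμlim f ⟨C, hC⟩)
      (Filter.Eventually.of_forall hmem)
    exact this
  · -- invariance
    intro f g hf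
    -- first, invariance for generators
    have hGen : ∀ g₀ ∈ Gen, ∀ f₀ : X → ℝ, IsBdd f₀ →
        μ (fun x => f₀ (act x g₀)) = μ f₀ := by
      intro g₀ hg₀ f₀ ⟨C, hC⟩
      have hC0 : 0 ≤ C := le_trans (abs_nonneg _) (hC (Classical.arbitrary X))
      have hbdd2 : IsBdd (fun x => f₀ (act x g₀)) := ⟨C, fun x => hC _⟩
      -- the difference of averages tends to 0 along atTop
      have hdiff : ∀ n, |avg (fun x => f₀ (act x g₀)) n - avg f₀ n|
          ≤ 2 * C * (1 / (n + 1)) := by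
        intro n
        set Q := (P n).image (fun x => act x g₀) with hQ
        have hsum : ∑ x ∈ P n, f₀ (act x g₀) = ∑ y ∈ Q, f₀ y := by
          rw [hQ, Finset.sum_image (fun x _ y _ h => hinj g₀ h)]
        have hcard : Q.card = (P n).card :=
          Finset.card_image_of_injective _ (hinj g₀)
        have hest : |∑ y ∈ Q, f₀ y - ∑ x ∈ P n, f₀ x|
            ≤ 2 * C * ((Q \ P n).card : ℝ) :=
          sum_diff_bound f₀ C hC (P n) Q hcard
        have hdiffcard : ((Q \ P n).card : ℝ) < (1 / (n + 1)) * (P n).card :=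
          hPf n g₀ hg₀
        have : |avg (fun x => f₀ (act x g₀)) n - avg f₀ n|
            = |∑ y ∈ Q, f₀ y - ∑ x ∈ P n, f₀ x| / (P n).card := by
          rw [havg]
          rw [← sub_div, abs_div, abs_of_pos (hcardpos n), hsum]
        rw [this, div_le_iff₀ (hcardpos n)]
        calc |∑ y ∈ Q, f₀ y - ∑ x ∈ P n, f₀ x|
            ≤ 2 * C * ((Q \ P n).card : ℝ) := hest
          _ ≤ 2 * C * ((1 / (n + 1)) * (P n).card) := by
              apply mul_le_mul_of_nonneg_left (le_of_lt hdiffcard); linarith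
          _ = 2 * C * (1 / (n + 1)) * (P n).card := by ring
      have hzero : Tendsto (fun n => avg (fun x => f₀ (act x g₀)) n - avg f₀ n)
          atTop (𝓝 0) := by
        apply squeeze_zero_norm hdiff
        have := tendsto_one_div_add_atTop_nhds_zero_nat (𝕜 := ℝ)
        have h2 : Tendsto (fun n : ℕ => 2 * C * (1 / (n + 1))) atTop
            (𝓝 (2 * C * 0)) := this.const_mul (2 * C)
        simpa using h2
      have hzero' : Tendsto (fun n => avg (fun x => f₀ (act x g₀)) n - avg f₀ n)
          u (𝓝 0) := hzero.mono_left hule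
      have h2 : Tendsto (avg (fun x => f₀ (act x g₀))) u (𝓝 (0 + μ f₀)) := by
        have := hzero'.add (hμlim f₀ ⟨C, hC⟩)
        simpa using this
      rw [zero_add] at h2
      exact tendsto_nhds_unique (hμlim _ hbdd2) h2
    -- extend to the whole group
    have hAll : ∀ g₀ : Γ, ∀ f₀ : X → ℝ, IsBdd f₀ →
        μ (fun x => f₀ (act x g₀)) = μ f₀ := by
      intro g₀
      have hg₀ : g₀ ∈ Subgroup.closure (Gen : Set Γ) := by
        rw [hgen]; exact Subgroup.mem_top g₀
      induction hg₀ using Subgroup.closure_induction with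
      | mem x hx => exact hGen x hx
      | one =>
          intro f₀ _
          simp only [act_one]
      | mul x y _ _ hx hy =>
          intro f₀ hf₀
          have hbdd : IsBdd (fun z => f₀ (act z y)) := by
            obtain ⟨C, hC⟩ := hf₀; exact ⟨C, fun z => hC _⟩
          have e : (fun z => f₀ (act z (x * y)))
              = (fun z => (fun w => f₀ (act w y)) (act z x)) := by
            funext z; rw [← act_mul]
          rw [e, hx _ hbdd, hy _ hf₀]
      | inv x _ hx =>
          intro f₀ hf₀
          have hbdd : IsBdd (fun z => f₀ (act z x⁻¹)) := by
            obtain ⟨C, hC⟩ := hf₀; exact ⟨C, fun z => hC _⟩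
          have := hx (fun z => f₀ (act z x⁻¹)) hbdd
          have e : (fun z => (fun w => f₀ (act w x⁻¹)) (act z x)) = f₀ := by
            funext z; simp only [act_mul, mul_inv_cancel, act_one]
          rw [e] at this
          exact this.symm
    exact hAll g f hf

lemma mean_to_folner {Γ X : Type*} [Group Γ] [Nonempty X] [DecidableEq X]
    (Gen : Finset Γ) (act : X → Γ → X) (act_one : ∀ x, act x 1 = x)
    (act_mul : ∀ (x : X) (g h : Γ), act (act x g) h = act x (g * h))
    (μ : (X → ℝ) → ℝ) (hμ : IsInvariantMean act μ)
    (ε : ℝ) (hε : 0 < ε)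
    (hfail : ∀ P : Finset X, P.Nonempty → ∃ g ∈ Gen,
      ε * P.card ≤ (((P.image fun x => act x g) \ P).card : ℝ)) : False := by
  classical
  -- injectivity of right translations
  have hinj : ∀ g : Γ, Function.Injective (fun x => act x g) := by
    intro g x y h
    have : act (act x g) g⁻¹ = act (act y g) g⁻¹ := by simp only at h; rw [h]
    rwa [act_mul, act_mul, mul_inv_cancel, act_one, act_one] at this
  -- balls of radius n
  set B : ℕ → Finset Γ := fun n => Nat.rec ({1} : Finset Γ)
    (fun _ Bn => Bn ∪ Gen.biUnion (fun g => Bn.image (· * g))) n with hB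
  have hB0 : B 0 = {1} := rfl
  have hBsucc : ∀ n, B (n + 1) = B n ∪ Gen.biUnion (fun g => (B n).image (· * g)) :=
    fun n => rfl
  have hone : ∀ n, (1 : Γ) ∈ B n := by
    intro n; induction n with
    | zero => simp [hB0]
    | succ n ih => rw [hBsucc]; exact Finset.mem_union_left _ ih
  -- the neighborhood map
  set N : Finset X → ℕ → Finset X :=
    fun A n => A.biUnion (fun x => (B n).image (act x)) with hN
  have hsub : ∀ (A : Finset X) (n), A ⊆ N A n := by
    intro A n x hx
    exact Finset.mem_biUnion.2 ⟨x, hx, Finset.mem_image.2 ⟨1, hone n, act_one x⟩⟩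
  -- expansion
  have hexp : ∀ (n : ℕ) (A : Finset X), A.Nonempty →
      (1 + ε) ^ n * A.card ≤ ((N A n).card : ℝ) := by
    intro n
    induction n with
    | zero =>
        intro A hA
        have : N A 0 = A := by
          apply Finset.Subset.antisymm _ (hsub A 0)
          intro y hy
          obtain ⟨x, hx, hy⟩ := Finset.mem_biUnion.1 hy
          obtain ⟨b, hb, hy⟩ := Finset.mem_image.1 hy
          rw [hB0, Finset.mem_singleton] at hb
          subst hb; rw [act_one] at hy; rwa [← hy]
        rw [this]; simp
    | succ n ih =>
        intro A hA
        set Q := N A n with hQ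
        have hQne : Q.Nonempty := hA.mono (hsub A n)
        obtain ⟨g, hg, hcard⟩ := hfail Q hQne
        have hsub2 : Q ∪ ((Q.image fun x => act x g) \ Q) ⊆ N A (n + 1) := by
          intro y hy
          rcases Finset.mem_union.1 hy with hy | hy
          · obtain ⟨x, hx, hy2⟩ := Finset.mem_biUnion.1 hy
            obtain ⟨b, hb, hy2⟩ := Finset.mem_image.1 hy2
            refine Finset.mem_biUnion.2 ⟨x, hx, Finset.mem_image.2 ⟨b, ?_, hy2⟩⟩
            rw [hBsucc]; exact Finset.mem_union_left _ hb
          · obtain ⟨z, hz, hy2⟩ := Finset.mem_image.1 (Finset.mem_sdiff.1 hy).1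
            obtain ⟨x, hx, hz2⟩ := Finset.mem_biUnion.1 hz
            obtain ⟨b, hb, hz2⟩ := Finset.mem_image.1 hz2
            refine Finset.mem_biUnion.2 ⟨x, hx, Finset.mem_image.2 ⟨b * g, ?_, ?_⟩⟩
            · rw [hBsucc]
              exact Finset.mem_union_right _ (Finset.mem_biUnion.2
                ⟨g, hg, Finset.mem_image.2 ⟨b, hb, rfl⟩⟩)
            · rw [← act_mul, hz2, hy2]
        have hdisj : Disjoint Q ((Q.image fun x => act x g) \ Q) :=
          Finset.disjoint_sdiff
        have hcards : ((Q ∪ ((Q.image fun x => act x g) \ Q)).card : ℝ)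
            = Q.card + ((Q.image fun x => act x g) \ Q).card := by
          rw [Finset.card_union_of_disjoint hdisj]; push_cast; ring
        have h1 : (1 + ε) * Q.card ≤ ((N A (n+1)).card : ℝ) := by
          have := Finset.card_le_card hsub2
          have hle : ((Q ∪ ((Q.image fun x => act x g) \ Q)).card : ℝ)
              ≤ ((N A (n+1)).card : ℝ) := by exact_mod_cast this
          rw [hcards] at hle
          nlinarith
        calc (1 + ε) ^ (n + 1) * A.card = (1 + ε) * ((1 + ε) ^ n * A.card) := by ring
          _ ≤ (1 + ε) * Q.card := by
              apply mul_le_mul_of_nonneg_left (ih A hA); linarith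
          _ ≤ _ := h1
  -- choose k with 2 ≤ (1+ε)^k
  obtain ⟨k, hk⟩ := pow_unbounded_of_one_lt (2 : ℝ) (by linarith : (1:ℝ) < 1 + ε)
  set S := B k with hS
  -- Hall's condition
  have hall : ∀ s : Finset (X × Fin 2), s.card ≤
      (s.biUnion (fun p => S.image (act p.1))).card := by
    intro s
    rcases s.eq_empty_or_nonempty with rfl | hs
    · simp
    set A := s.image Prod.fst with hA
    have hAne : A.Nonempty := hs.image _
    have h1 : N A k = s.biUnion (fun p => S.image (act p.1)) := by
      show (s.image Prod.fst).biUnion (fun x => (B k).image (act x)) = _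
      exact Finset.image_biUnion
    have h2 : s.card ≤ 2 * A.card := by
      have hsub3 : s ⊆ A ×ˢ (Finset.univ : Finset (Fin 2)) := by
        intro p hp
        exact Finset.mem_product.2 ⟨Finset.mem_image_of_mem _ hp, Finset.mem_univ _⟩
      calc s.card ≤ (A ×ˢ (Finset.univ : Finset (Fin 2))).card := Finset.card_le_card hsub3
        _ = 2 * A.card := by rw [Finset.card_product]; simp [mul_comm]
    have h3 : (2 * A.card : ℝ) ≤ ((N A k).card : ℝ) := by
      calc (2 * A.card : ℝ) ≤ (1 + ε) ^ k * A.card := by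
            apply mul_le_mul_of_nonneg_right (le_of_lt hk); positivity
        _ ≤ _ := hexp k A hAne
    rw [← h1]
    have h2' : (s.card : ℝ) ≤ 2 * A.card := by exact_mod_cast h2
    exact_mod_cast le_trans h2' h3
  obtain ⟨f, hfinj, hf⟩ := (Finset.all_card_le_biUnion_card_iff_exists_injective
    (fun p : X × Fin 2 => S.image (act p.1))).1 hall
  -- choose labels
  have hb' : ∀ p : X × Fin 2, ∃ b, b ∈ S ∧ act p.1 b = f p := by
    intro p
    obtain ⟨b, hb1, hb2⟩ := Finset.mem_image.1 (hf p)
    exact ⟨b, hb1, hb2⟩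
  choose lab hlabS hlab using hb'
  -- indicator functions
  set indA : Fin 2 × Γ → X → ℝ :=
    fun p x => if lab (x, p.1) = p.2 then 1 else 0 with hindA
  set indT : Fin 2 × Γ → X → ℝ :=
    fun p y => if (∃ x, lab (x, p.1) = p.2 ∧ act x p.2 = y) then 1 else 0 with hindT
  have bddA : ∀ p, IsBdd (indA p) := by
    intro p; exact ⟨1, fun x => by by_cases h : lab (x, p.1) = p.2 <;> simp [hindA, h]⟩
  have bddT : ∀ p, IsBdd (indT p) := by
    intro p
    exact ⟨1, fun y => by
      by_cases h : (∃ x, lab (x, p.1) = p.2 ∧ act x p.2 = y) <;> simp [hindT, h]⟩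
  -- translation relation
  have key : ∀ p : Fin 2 × Γ, μ (indA p) = μ (indT p) := by
    intro p
    have : indA p = fun x => indT p (act x p.2) := by
      funext x
      simp only [hindA, hindT]
      congr 1
      apply propext
      constructor
      · intro h; exact ⟨x, h, rfl⟩
      · rintro ⟨x', h1, h2⟩
        have : x' = x := hinj p.2 h2
        rwa [← this]
    rw [this, hμ.invariant _ p.2 (bddT p)]
  -- sum of indA over S is 1 for each i
  have sumA : ∀ (i : Fin 2) (x : X), ∑ c ∈ S, indA (i, c) x = 1 := by
    intro i x
    simp only [hindA]
    rw [Finset.sum_ite_eq S (lab (x, i)) (fun _ => (1:ℝ))]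
    simp [hlabS (x, i)]
  -- sum of indT over all pairs is ≤ 1
  have sumT : ∀ y : X, ∑ p ∈ (Finset.univ : Finset (Fin 2)) ×ˢ S, indT p y ≤ 1 := by
    intro y
    have : ∑ p ∈ (Finset.univ : Finset (Fin 2)) ×ˢ S, indT p y =
        ((((Finset.univ : Finset (Fin 2)) ×ˢ S).filter
          (fun p => ∃ x, lab (x, p.1) = p.2 ∧ act x p.2 = y)).card : ℝ) := by
      rw [Finset.sum_boole]
    rw [this]
    have hc : (((Finset.univ : Finset (Fin 2)) ×ˢ S).filter
        (fun p => ∃ x, lab (x, p.1) = p.2 ∧ act x p.2 = y)).card ≤ 1 := by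
      apply Finset.card_le_one.2
      intro p hp q hq
      obtain ⟨x, hx1, hx2⟩ := (Finset.mem_filter.1 hp).2
      obtain ⟨x', hx1', hx2'⟩ := (Finset.mem_filter.1 hq).2
      have hyp : f (x, p.1) = y := by rw [← hlab (x, p.1), hx1, hx2]
      have hyq : f (x', q.1) = y := by rw [← hlab (x', q.1), hx1', hx2']
      have : (x, p.1) = (x', q.1) := hfinj (by rw [hyp, hyq])
      have hx : x = x' := congrArg Prod.fst this
      have hi : p.1 = q.1 := congrArg Prod.snd this
      have : p.2 = q.2 := by rw [← hx1, ← hx1', hx, hi]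
      exact Prod.ext hi this
    exact_mod_cast hc
  -- the contradiction
  set s := (Finset.univ : Finset (Fin 2)) ×ˢ S with hs
  have h2 : μ (∑ p ∈ s, indA p) = 2 := by
    have : (∑ p ∈ s, indA p) = fun _ : X => (2 : ℝ) := by
      funext x
      rw [Finset.sum_apply]
      rw [hs, Finset.sum_product]
      simp only [sumA]
      simp
    rw [this, mu_const hμ 2]
  have h3 : μ (∑ p ∈ s, indA p) = μ (∑ p ∈ s, indT p) := by
    rw [mu_finsum hμ s indA (fun p _ => bddA p), mu_finsum hμ s indT (fun p _ => bddT p)]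
    exact Finset.sum_congr rfl (fun p _ => key p)
  have h4 : μ (∑ p ∈ s, indT p) ≤ 1 := by
    have hbdd : IsBdd (∑ p ∈ s, indT p) := isBdd_sum s indT (fun p _ => bddT p)
    have := (hμ.between _ hbdd).2
    refine le_trans this (csSup_le (Set.range_nonempty _) ?_)
    rintro y ⟨x, rfl⟩
    rw [Finset.sum_apply]
    exact sumT x
  rw [h3] at h2
  linarith

theorem stmt3 {Γ X : Type*} [Group Γ] [Countable X] [Nonempty X] [DecidableEq X]
    (Gen : Finset Γ) (hsym : ∀ g ∈ Gen, g⁻¹ ∈ Gen)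
    (hgen : Subgroup.closure (Gen : Set Γ) = ⊤)
    (act : X → Γ → X) (act_one : ∀ x, act x 1 = x)
    (act_mul : ∀ (x : X) (g h : Γ), act (act x g) h = act x (g * h)) :
    (∃ μ : (X → ℝ) → ℝ, IsInvariantMean act μ) ↔
      (∀ ε : ℝ, 0 < ε → ∃ P : Finset X, P.Nonempty ∧ ∀ g ∈ Gen,
        (((P.image fun x => act x g) \ P).card : ℝ) < ε * P.card) := by
  constructor
  · rintro ⟨μ, hμ⟩
    by_contra hcon
    push_neg at hcon
    obtain ⟨ε, hε, hfail⟩ := hcon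
    exact mean_to_folner Gen act act_one act_mul μ hμ ε hε hfail
  · intro h
    exact folner_to_mean Gen hgen act act_one act_mul h
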